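/- The scalars θ_0, θ_1, …, θ_d are mutually distinct if and only if both (i) q^{2i} ≠ 1 for 1 ≤ i ≤ d, and (ii) a^2 is not among q^{2d−2}, q^{2d−4}, …, q^{2−2d}. -/
import Mathlib


theorem stmt_1 {F : Type*} [Field F] (a q : F) (ha : a ≠ 0) (hq : q ≠ 0)
    (hq4 : q ^ 4 ≠ 1) (d : ℕ)
    (θ : ℕ → F) (hθ : ∀ i, θ i = a * q ^ (2*(i:ℤ) - d) + a⁻¹ * q ^ ((d:ℤ) - 2*i)) :
    (∀ i j, i ≤ d → j ≤ d → i ≠ j → θ i ≠ θ j) ↔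
      ((∀ i : ℕ, 1 ≤ i → i ≤ d → q ^ (2*i) ≠ 1) ∧
       (∀ k : ℕ, 1 ≤ k → k ≤ 2*d - 1 → a ^ 2 ≠ q ^ (2*(d:ℤ) - 2*k))) := by
  have key : ∀ i j : ℕ, θ i - θ j
      = (q ^ (2*(i:ℤ) - 2*j) - 1) * (a⁻¹ * q ^ (2*(j:ℤ) - d))
        * (a^2 - q ^ (2*(d:ℤ) - 2*i - 2*j)) := by
    intro i j
    rw [hθ, hθ]
    have hA : q ^ (2*(i:ℤ)) ≠ 0 := zpow_ne_zero _ hq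
    have hB : q ^ (2*(j:ℤ)) ≠ 0 := zpow_ne_zero _ hq
    have hC : q ^ ((d:ℤ)) ≠ 0 := zpow_ne_zero _ hq
    rw [show (2*(d:ℤ) - 2*i - 2*j) = ((d:ℤ) + (d:ℤ)) - (2*(i:ℤ) + 2*(j:ℤ)) by ring]
    rw [zpow_sub₀ hq, zpow_sub₀ hq, zpow_sub₀ hq, zpow_sub₀ hq, zpow_sub₀ hq, zpow_sub₀ hq,
        zpow_add₀ hq, zpow_add₀ hq]
    field_simp
    ring
  have hmid : ∀ j : ℕ, a⁻¹ * q ^ (2*(j:ℤ) - d) ≠ 0 :=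
    fun j => mul_ne_zero (inv_ne_zero ha) (zpow_ne_zero _ hq)
  have equiv : ∀ i j : ℕ, θ i ≠ θ j ↔
      (q ^ (2*(i:ℤ) - 2*j) ≠ 1 ∧ a^2 ≠ q ^ (2*(d:ℤ) - 2*i - 2*j)) := by
    intro i j
    rw [← sub_ne_zero, key i j]
    rw [mul_ne_zero_iff, mul_ne_zero_iff]
    constructor
    · rintro ⟨⟨h1, _⟩, h2⟩
      exact ⟨sub_ne_zero.mp h1, sub_ne_zero.mp h2⟩
    · rintro ⟨h1, h2⟩
      exact ⟨⟨sub_ne_zero.mpr h1, hmid j⟩, sub_ne_zero.mpr h2⟩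
  constructor
  · intro H
    constructor
    · intro m h1 hm
      have := (equiv m 0).mp (H m 0 hm (Nat.zero_le d) (by omega))
      have h := this.1
      have : ((2*m : ℕ) : ℤ) = 2*(m:ℤ) - 2*(0:ℕ) := by push_cast; ring
      rw [← zpow_natCast q (2*m), this]
      exact h
    · intro k h1 hk
      by_cases hkd : k ≤ d
      · have := (equiv k 0).mp (H k 0 hkd (Nat.zero_le d) (by omega))
        have h := this.2
        have he : (2*(d:ℤ) - 2*k) = 2*(d:ℤ) - 2*(k:ℕ) - 2*(0:ℕ) := by push_cast; ring
        rw [he]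
        exact h
      · have hd1 : 1 ≤ d := by omega
        have hk2 : k ≤ 2*d - 1 := hk
        have hj : k - d ≤ d := by omega
        have hne : d ≠ k - d := by omega
        have := (equiv d (k - d)).mp (H d (k - d) le_rfl hj hne)
        have h := this.2
        have he : (2*(d:ℤ) - 2*k) = 2*(d:ℤ) - 2*(d:ℕ) - 2*((k - d : ℕ):ℤ) := by
          have : ((k - d : ℕ) : ℤ) = (k:ℤ) - d := by omega
          rw [this]; push_cast; ring
        rw [he]
        exact h
  · rintro ⟨h1, h2⟩ i j hi hj hij
    have hpow : ∀ m : ℕ, 1 ≤ m → m ≤ d → q ^ (2*(m:ℤ)) ≠ 1 := by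
      intro m hm1 hm2
      have := h1 m hm1 hm2
      rwa [← zpow_natCast q (2*m), show ((2*m : ℕ) : ℤ) = 2*(m:ℤ) by push_cast; ring] at this
    rw [equiv i j]
    constructor
    · rcases lt_or_gt_of_ne hij with h | h
      · -- i < j
        have hm := hpow (j - i) (by omega) (by omega)
        have he : (2*(i:ℤ) - 2*j) = -(2*((j - i : ℕ):ℤ)) := by
          have : ((j - i : ℕ) : ℤ) = (j:ℤ) - i := by omega
          rw [this]; ring
        rw [he, zpow_neg]
        intro hc
        exact hm (inv_eq_one.mp hc)
      · have hm := hpow (i - j) (by omega) (by omega)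
        have he : (2*(i:ℤ) - 2*j) = 2*((i - j : ℕ):ℤ) := by
          have : ((i - j : ℕ) : ℤ) = (i:ℤ) - j := by omega
          rw [this]; ring
        rw [he]
        exact hm
    · have hd1 : 1 ≤ d := by omega
      have := h2 (i + j) (by omega) (by omega)
      rwa [show (2*(d:ℤ) - 2*((i+j : ℕ):ℤ)) = 2*(d:ℤ) - 2*i - 2*j by push_cast; ring] at this
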